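/- Under the hypotheses of the local energy balance for the ε-dependent rod system — ε ≥ 0, μ > 0, a > 0, P_k = diag(1,1,k); continuously differentiable fields r̆, v, ω, n, κ : [0,1] × ℝ → ℝ³ (with continuous partial derivatives on [0,1] × ℝ); orthogonal-matrix-valued D; V : ℝ³ → ℝ continuously differentiable; satisfying D·∂_t r̆ = v, ε²μ²a P_{1/a}·∂_t n = ∂_s v + κ×v + e₃×ω + ε²μ²a (P_{1/a}·n)×ω, ∂_tκ = ∂_sω + κ×ω, ∂_t v = ∂_s n + κ×n + v×ω + D·(−∇V(r̆)), ε²P₂·∂_tω = μ⁻²(P_{2/a}·∂_sκ + κ×(P_{2/a}·κ)) + e₃×n + ε²(μ²a(P_{1/a}·n)×n + (P₂·ω)×ω) — assume in addition the cantilever boundary conditions v(0,t) = 0, ω(0,t) = 0, n(1,t) = 0 and κ(1,t) = 0 for all t. Then the total energy E_ε(t) := ∫₀¹ [½‖v‖² + (ε²/2) ω·(P₂·ω) + (ε²μ²a/2) n·(P_{1/a}·n) + (2μ²)⁻¹ κ·(P_{2/a}·κ) + V(r̆)](s,t) ds is constant in t. -/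

import Mathlib

open Matrix

noncomputable section

/-- Cross product on `ℝ³`. -/
def cross3 (a b : Fin 3 → ℝ) : Fin 3 → ℝ :=
  ![a 1 * b 2 - a 2 * b 1, a 2 * b 0 - a 0 * b 2, a 0 * b 1 - a 1 * b 0]

/-- Partial derivative with respect to the time variable `t` (second component). -/
def pt {E : Type*} [NormedAddCommGroup E] [NormedSpace ℝ E]
    (f : ℝ × ℝ → E) (p : ℝ × ℝ) : E :=
  deriv (fun t => f (p.1, t)) p.2

/-- Partial derivative with respect to the space variable `s` (first component). -/
def ps {E : Type*} [NormedAddCommGroup E] [NormedSpace ℝ E]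
    (f : ℝ × ℝ → E) (p : ℝ × ℝ) : E :=
  deriv (fun s => f (s, p.2)) p.1

/-- Coordinate gradient of a scalar function on `ℝ³`. -/
def grad3 (V : (Fin 3 → ℝ) → ℝ) (x : Fin 3 → ℝ) : Fin 3 → ℝ :=
  fun i => fderiv ℝ V x (Pi.single i 1)

/-- `P_k = diag(1,1,k)`. -/
def Pk (k : ℝ) : Matrix (Fin 3) (Fin 3) ℝ := Matrix.diagonal ![1, 1, k]

/-! ### Auxiliary lemmas -/

section auxA
variable {E : Type*} [NormedAddCommGroup E] [NormedSpace ℝ E]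

lemma hasDerivAt_pt (f : ℝ × ℝ → E) (hf : ContDiff ℝ 1 f) (p : ℝ × ℝ) :
    HasDerivAt (fun t => f (p.1, t)) (pt f p) p.2 := by
  have h : DifferentiableAt ℝ (fun t => f (p.1, t)) p.2 :=
    ((hf.differentiable one_ne_zero) (p.1, p.2)).comp p.2
      ((differentiableAt_const _).prodMk differentiableAt_id)
  exact h.hasDerivAt

lemma hasDerivAt_ps (f : ℝ × ℝ → E) (hf : ContDiff ℝ 1 f) (p : ℝ × ℝ) :
    HasDerivAt (fun s => f (s, p.2)) (ps f p) p.1 := by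
  have h : DifferentiableAt ℝ (fun s => f (s, p.2)) p.1 :=
    ((hf.differentiable one_ne_zero) (p.1, p.2)).comp p.1
      (differentiableAt_id.prodMk (differentiableAt_const _))
  exact h.hasDerivAt

lemma pt_eq_fderiv (f : ℝ × ℝ → E) (hf : ContDiff ℝ 1 f) (p : ℝ × ℝ) :
    pt f p = fderiv ℝ f p (0, 1) := by
  have h1 : HasDerivAt (fun t => f (p.1, t)) (fderiv ℝ f p ((0 : ℝ), (1 : ℝ))) p.2 :=
    ((hf.differentiable one_ne_zero p).hasFDerivAt).comp_hasDerivAt p.2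
      (HasDerivAt.prodMk (hasDerivAt_const p.2 p.1) (hasDerivAt_id p.2))
  exact h1.deriv

lemma ps_eq_fderiv (f : ℝ × ℝ → E) (hf : ContDiff ℝ 1 f) (p : ℝ × ℝ) :
    ps f p = fderiv ℝ f p (1, 0) := by
  have h1 : HasDerivAt (fun s => f (s, p.2)) (fderiv ℝ f p ((1 : ℝ), (0 : ℝ))) p.1 :=
    ((hf.differentiable one_ne_zero p).hasFDerivAt).comp_hasDerivAt p.1
      (HasDerivAt.prodMk (hasDerivAt_id p.1) (hasDerivAt_const p.1 p.2))
  exact h1.deriv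

lemma continuous_pt (f : ℝ × ℝ → E) (hf : ContDiff ℝ 1 f) : Continuous (pt f) := by
  have h : pt f = fun p => fderiv ℝ f p (0, 1) := funext (pt_eq_fderiv f hf)
  rw [h]
  exact isBoundedBilinearMap_apply.continuous.comp
    ((hf.continuous_fderiv one_ne_zero).prodMk continuous_const)

lemma continuous_ps (f : ℝ × ℝ → E) (hf : ContDiff ℝ 1 f) : Continuous (ps f) := by
  have h : ps f = fun p => fderiv ℝ f p (1, 0) := funext (ps_eq_fderiv f hf)
  rw [h]
  exact isBoundedBilinearMap_apply.continuous.comp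
    ((hf.continuous_fderiv one_ne_zero).prodMk continuous_const)

end auxA

lemma cross3_0 (a b : Fin 3 → ℝ) : cross3 a b 0 = a 1 * b 2 - a 2 * b 1 := rfl
lemma cross3_1 (a b : Fin 3 → ℝ) : cross3 a b 1 = a 2 * b 0 - a 0 * b 2 := rfl
lemma cross3_2 (a b : Fin 3 → ℝ) : cross3 a b 2 = a 0 * b 1 - a 1 * b 0 := rfl

lemma cross3_e3_0 (x : Fin 3 → ℝ) : cross3 ![0, 0, 1] x 0 = -(x 1) := by
  show (0 : ℝ) * x 2 - 1 * x 1 = _; ring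
lemma cross3_e3_1 (x : Fin 3 → ℝ) : cross3 ![0, 0, 1] x 1 = x 0 := by
  show (1 : ℝ) * x 0 - 0 * x 2 = _; ring
lemma cross3_e3_2 (x : Fin 3 → ℝ) : cross3 ![0, 0, 1] x 2 = 0 := by
  show (0 : ℝ) * x 1 - 0 * x 0 = _; ring

lemma Pk_mulVec0 (k : ℝ) (x : Fin 3 → ℝ) : (Pk k).mulVec x 0 = x 0 := by
  simp [Pk, Matrix.mulVec_diagonal]
lemma Pk_mulVec1 (k : ℝ) (x : Fin 3 → ℝ) : (Pk k).mulVec x 1 = x 1 := by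
  simp [Pk, Matrix.mulVec_diagonal]
lemma Pk_mulVec2 (k : ℝ) (x : Fin 3 → ℝ) : (Pk k).mulVec x 2 = k * x 2 := by
  simp [Pk, Matrix.mulVec_diagonal]
lemma dot_expand (x y : Fin 3 → ℝ) : x ⬝ᵥ y = x 0 * y 0 + x 1 * y 1 + x 2 * y 2 := by
  simp [dotProduct, Fin.sum_univ_three]
lemma mulVec_expand (M : Matrix (Fin 3) (Fin 3) ℝ) (x : Fin 3 → ℝ) (i : Fin 3) :
    M.mulVec x i = M i 0 * x 0 + M i 1 * x 1 + M i 2 * x 2 := by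
  simp [Matrix.mulVec, dotProduct, Fin.sum_univ_three]

lemma hasDerivAt_pt_comp (f : ℝ × ℝ → Fin 3 → ℝ) (hf : ContDiff ℝ 1 f) (p : ℝ × ℝ) (i : Fin 3) :
    HasDerivAt (fun t => f (p.1, t) i) (pt f p i) p.2 :=
  hasDerivAt_pi.1 (hasDerivAt_pt f hf p) i

lemma hasDerivAt_ps_comp (f : ℝ × ℝ → Fin 3 → ℝ) (hf : ContDiff ℝ 1 f) (p : ℝ × ℝ) (i : Fin 3) :
    HasDerivAt (fun s => f (s, p.2) i) (ps f p i) p.1 :=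
  hasDerivAt_pi.1 (hasDerivAt_ps f hf p) i

lemma contDiff_comp3 (f : ℝ × ℝ → Fin 3 → ℝ) (hf : ContDiff ℝ 1 f) (i : Fin 3) :
    ContDiff ℝ 1 (fun p => f p i) := contDiff_pi.1 hf i

lemma fderiv_eq_grad3 (V : (Fin 3 → ℝ) → ℝ) (x u : Fin 3 → ℝ) :
    fderiv ℝ V x u = grad3 V x 0 * u 0 + grad3 V x 1 * u 1 + grad3 V x 2 * u 2 := by
  have hu : u = u 0 • Pi.single (M := fun _ : Fin 3 => ℝ) 0 1
      + u 1 • Pi.single (M := fun _ : Fin 3 => ℝ) 1 1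
      + u 2 • Pi.single (M := fun _ : Fin 3 => ℝ) 2 1 := by
    funext i; fin_cases i <;> simp [Pi.single_apply]
  conv_lhs => rw [hu]
  simp only [map_add, _root_.map_smul, smul_eq_mul, grad3]
  ring

/-- Energy density. -/
def Wd (ε μ a : ℝ) (r v ω n κ : ℝ × ℝ → Fin 3 → ℝ) (V : (Fin 3 → ℝ) → ℝ) (p : ℝ × ℝ) : ℝ :=
  (1 / 2) * (v p ⬝ᵥ v p) + (ε ^ 2 / 2) * (ω p ⬝ᵥ (Pk 2).mulVec (ω p))
    + (ε ^ 2 * μ ^ 2 * a / 2) * (n p ⬝ᵥ (Pk a⁻¹).mulVec (n p))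
    + (2 * μ ^ 2)⁻¹ * (κ p ⬝ᵥ (Pk (2 / a)).mulVec (κ p)) + V (r p)

/-- Energy flux. -/
def Fl (μ a : ℝ) (v ω n κ : ℝ × ℝ → Fin 3 → ℝ) (p : ℝ × ℝ) : ℝ :=
  v p ⬝ᵥ n p + (μ ^ 2)⁻¹ * (ω p ⬝ᵥ (Pk (2 / a)).mulVec (κ p))
theorem energy_aux
    (ε μ a : ℝ)
    (r v ω n κ : ℝ × ℝ → Fin 3 → ℝ)
    (hr : ContDiff ℝ 1 r) (hv : ContDiff ℝ 1 v) (hω : ContDiff ℝ 1 ω)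
    (hn : ContDiff ℝ 1 n) (hκ : ContDiff ℝ 1 κ)
    (D : ℝ × ℝ → Matrix (Fin 3) (Fin 3) ℝ)
    (hD : ∀ p : ℝ × ℝ, D p * (D p)ᵀ = 1)
    (V : (Fin 3 → ℝ) → ℝ) (hV : ContDiff ℝ 1 V)
    (hkin : ∀ p : ℝ × ℝ, p.1 ∈ Set.Icc (0:ℝ) 1 → (D p).mulVec (pt r p) = v p)
    (hstrain : ∀ p : ℝ × ℝ, p.1 ∈ Set.Icc (0:ℝ) 1 →
      (ε ^ 2 * μ ^ 2 * a) • (Pk a⁻¹).mulVec (pt n p)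
        = ps v p + cross3 (κ p) (v p) + cross3 ![0, 0, 1] (ω p)
          + (ε ^ 2 * μ ^ 2 * a) • cross3 ((Pk a⁻¹).mulVec (n p)) (ω p))
    (hcompat : ∀ p : ℝ × ℝ, p.1 ∈ Set.Icc (0:ℝ) 1 →
      pt κ p = ps ω p + cross3 (κ p) (ω p))
    (hlin : ∀ p : ℝ × ℝ, p.1 ∈ Set.Icc (0:ℝ) 1 →
      pt v p = ps n p + cross3 (κ p) (n p) + cross3 (v p) (ω p)
        + (D p).mulVec (-(grad3 V (r p))))
    (hang : ∀ p : ℝ × ℝ, p.1 ∈ Set.Icc (0:ℝ) 1 →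
      (ε ^ 2) • (Pk 2).mulVec (pt ω p)
        = (μ ^ 2)⁻¹ • ((Pk (2 / a)).mulVec (ps κ p)
            + cross3 (κ p) ((Pk (2 / a)).mulVec (κ p)))
          + cross3 ![0, 0, 1] (n p)
          + (ε ^ 2) • ((μ ^ 2 * a) • cross3 ((Pk a⁻¹).mulVec (n p)) (n p)
            + cross3 ((Pk 2).mulVec (ω p)) (ω p)))
    (hbc : ∀ t : ℝ, v (0, t) = 0 ∧ ω (0, t) = 0 ∧ n (1, t) = 0 ∧ κ (1, t) = 0)
    (t₁ t₂ : ℝ) (hle : t₁ ≤ t₂) :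
    (∫ s in (0:ℝ)..1, Wd ε μ a r v ω n κ V (s, t₁))
      = ∫ s in (0:ℝ)..1, Wd ε μ a r v ω n κ V (s, t₂) := by
  have le01 : (0:ℝ) ≤ 1 := by norm_num
  -- smoothness of the density and flux
  have cv := fun i => contDiff_comp3 v hv i
  have cω := fun i => contDiff_comp3 ω hω i
  have cn := fun i => contDiff_comp3 n hn i
  have cκ := fun i => contDiff_comp3 κ hκ i
  have hWc : ContDiff ℝ 1 (Wd ε μ a r v ω n κ V) := by
    have e : Wd ε μ a r v ω n κ V = fun p =>
        (1 / 2) * (v p 0 * v p 0 + v p 1 * v p 1 + v p 2 * v p 2)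
        + (ε ^ 2 / 2) * (ω p 0 * ω p 0 + ω p 1 * ω p 1 + ω p 2 * (2 * ω p 2))
        + (ε ^ 2 * μ ^ 2 * a / 2) * (n p 0 * n p 0 + n p 1 * n p 1 + n p 2 * (a⁻¹ * n p 2))
        + (2 * μ ^ 2)⁻¹ * (κ p 0 * κ p 0 + κ p 1 * κ p 1 + κ p 2 * (2 / a * κ p 2))
        + V (r p) := by
      funext p; simp only [Wd, dot_expand, Pk_mulVec0, Pk_mulVec1, Pk_mulVec2]
    rw [e]
    exact ((((contDiff_const.mul ((((cv 0).mul (cv 0)).add ((cv 1).mul (cv 1))).add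
        ((cv 2).mul (cv 2)))).add
      (contDiff_const.mul ((((cω 0).mul (cω 0)).add ((cω 1).mul (cω 1))).add
        ((cω 2).mul (contDiff_const.mul (cω 2)))))).add
      (contDiff_const.mul ((((cn 0).mul (cn 0)).add ((cn 1).mul (cn 1))).add
        ((cn 2).mul (contDiff_const.mul (cn 2)))))).add
      (contDiff_const.mul ((((cκ 0).mul (cκ 0)).add ((cκ 1).mul (cκ 1))).add
        ((cκ 2).mul (contDiff_const.mul (cκ 2)))))).add (hV.comp hr)
  have hFc : ContDiff ℝ 1 (Fl μ a v ω n κ) := by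
    have e : Fl μ a v ω n κ = fun p =>
        (v p 0 * n p 0 + v p 1 * n p 1 + v p 2 * n p 2)
        + (μ ^ 2)⁻¹ * (ω p 0 * κ p 0 + ω p 1 * κ p 1 + ω p 2 * (2 / a * κ p 2)) := by
      funext p; simp only [Fl, dot_expand, Pk_mulVec0, Pk_mulVec1, Pk_mulVec2]
    rw [e]
    exact ((((cv 0).mul (cn 0)).add ((cv 1).mul (cn 1))).add ((cv 2).mul (cn 2))).add
      (contDiff_const.mul ((((cω 0).mul (cκ 0)).add ((cω 1).mul (cκ 1))).add
        ((cω 2).mul (contDiff_const.mul (cκ 2)))))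
  have cptW : Continuous (pt (Wd ε μ a r v ω n κ V)) := continuous_pt _ hWc
  have cpsF : Continuous (ps (Fl μ a v ω n κ)) := continuous_ps _ hFc
  -- the key pointwise identity : ∂ₜ W = ∂ₛ F
  have key : ∀ p : ℝ × ℝ, p.1 ∈ Set.Icc (0:ℝ) 1 →
      pt (Wd ε μ a r v ω n κ V) p = ps (Fl μ a v ω n κ) p := by
    intro p hp
    have Hv := fun i => hasDerivAt_pt_comp v hv p i
    have Hω := fun i => hasDerivAt_pt_comp ω hω p i
    have Hn := fun i => hasDerivAt_pt_comp n hn p i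
    have Hκ := fun i => hasDerivAt_pt_comp κ hκ p i
    have Sv := fun i => hasDerivAt_ps_comp v hv p i
    have Sn := fun i => hasDerivAt_ps_comp n hn p i
    have Sω := fun i => hasDerivAt_ps_comp ω hω p i
    have Sκ := fun i => hasDerivAt_ps_comp κ hκ p i
    have Hr : HasDerivAt (fun t => r (p.1, t)) (pt r p) p.2 := hasDerivAt_pt r hr p
    have HV : HasDerivAt (fun t => V (r (p.1, t))) (fderiv ℝ V (r p) (pt r p)) p.2 :=
      (((hV.differentiable one_ne_zero) (r (p.1, p.2))).hasFDerivAt).comp_hasDerivAt p.2 Hr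
    have hWt : HasDerivAt (fun t => Wd ε μ a r v ω n κ V (p.1, t))
        ((1 / 2) * ((pt v p 0 * v p 0 + v p 0 * pt v p 0)
            + (pt v p 1 * v p 1 + v p 1 * pt v p 1)
            + (pt v p 2 * v p 2 + v p 2 * pt v p 2))
          + (ε ^ 2 / 2) * ((pt ω p 0 * ω p 0 + ω p 0 * pt ω p 0)
            + (pt ω p 1 * ω p 1 + ω p 1 * pt ω p 1)
            + (pt ω p 2 * (2 * ω p 2) + ω p 2 * (2 * pt ω p 2)))
          + (ε ^ 2 * μ ^ 2 * a / 2) * ((pt n p 0 * n p 0 + n p 0 * pt n p 0)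
            + (pt n p 1 * n p 1 + n p 1 * pt n p 1)
            + (pt n p 2 * (a⁻¹ * n p 2) + n p 2 * (a⁻¹ * pt n p 2)))
          + (2 * μ ^ 2)⁻¹ * ((pt κ p 0 * κ p 0 + κ p 0 * pt κ p 0)
            + (pt κ p 1 * κ p 1 + κ p 1 * pt κ p 1)
            + (pt κ p 2 * (2 / a * κ p 2) + κ p 2 * (2 / a * pt κ p 2)))
          + fderiv ℝ V (r p) (pt r p)) p.2 := by
      have e : (fun t => Wd ε μ a r v ω n κ V (p.1, t)) = fun t =>
          (1 / 2) * (v (p.1, t) 0 * v (p.1, t) 0 + v (p.1, t) 1 * v (p.1, t) 1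
              + v (p.1, t) 2 * v (p.1, t) 2)
          + (ε ^ 2 / 2) * (ω (p.1, t) 0 * ω (p.1, t) 0 + ω (p.1, t) 1 * ω (p.1, t) 1
              + ω (p.1, t) 2 * (2 * ω (p.1, t) 2))
          + (ε ^ 2 * μ ^ 2 * a / 2) * (n (p.1, t) 0 * n (p.1, t) 0
              + n (p.1, t) 1 * n (p.1, t) 1 + n (p.1, t) 2 * (a⁻¹ * n (p.1, t) 2))
          + (2 * μ ^ 2)⁻¹ * (κ (p.1, t) 0 * κ (p.1, t) 0 + κ (p.1, t) 1 * κ (p.1, t) 1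
              + κ (p.1, t) 2 * (2 / a * κ (p.1, t) 2))
          + V (r (p.1, t)) := by
        funext t; simp only [Wd, dot_expand, Pk_mulVec0, Pk_mulVec1, Pk_mulVec2]
      rw [e]
      exact (((((HasDerivAt.const_mul ((1:ℝ)/2)
          ((((Hv 0).mul (Hv 0)).add ((Hv 1).mul (Hv 1))).add ((Hv 2).mul (Hv 2))))).add
        (HasDerivAt.const_mul (ε ^ 2 / 2)
          ((((Hω 0).mul (Hω 0)).add ((Hω 1).mul (Hω 1))).add
            ((Hω 2).mul (HasDerivAt.const_mul (2:ℝ) (Hω 2)))))).add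
        (HasDerivAt.const_mul (ε ^ 2 * μ ^ 2 * a / 2)
          ((((Hn 0).mul (Hn 0)).add ((Hn 1).mul (Hn 1))).add
            ((Hn 2).mul (HasDerivAt.const_mul a⁻¹ (Hn 2)))))).add
        (HasDerivAt.const_mul ((2 * μ ^ 2)⁻¹)
          ((((Hκ 0).mul (Hκ 0)).add ((Hκ 1).mul (Hκ 1))).add
            ((Hκ 2).mul (HasDerivAt.const_mul (2/a) (Hκ 2)))))).add HV
    have hFs : HasDerivAt (fun s => Fl μ a v ω n κ (s, p.2))
        (((ps v p 0 * n p 0 + v p 0 * ps n p 0) + (ps v p 1 * n p 1 + v p 1 * ps n p 1)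
            + (ps v p 2 * n p 2 + v p 2 * ps n p 2))
          + (μ ^ 2)⁻¹ * ((ps ω p 0 * κ p 0 + ω p 0 * ps κ p 0)
            + (ps ω p 1 * κ p 1 + ω p 1 * ps κ p 1)
            + (ps ω p 2 * (2 / a * κ p 2) + ω p 2 * (2 / a * ps κ p 2)))) p.1 := by
      have e : (fun s => Fl μ a v ω n κ (s, p.2)) = fun s =>
          (v (s, p.2) 0 * n (s, p.2) 0 + v (s, p.2) 1 * n (s, p.2) 1
            + v (s, p.2) 2 * n (s, p.2) 2)
          + (μ ^ 2)⁻¹ * (ω (s, p.2) 0 * κ (s, p.2) 0 + ω (s, p.2) 1 * κ (s, p.2) 1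
            + ω (s, p.2) 2 * (2 / a * κ (s, p.2) 2)) := by
        funext s; simp only [Fl, dot_expand, Pk_mulVec0, Pk_mulVec1, Pk_mulVec2]
      rw [e]
      exact ((((Sv 0).mul (Sn 0)).add ((Sv 1).mul (Sn 1))).add ((Sv 2).mul (Sn 2))).add
        (HasDerivAt.const_mul ((μ ^ 2)⁻¹)
          ((((Sω 0).mul (Sκ 0)).add ((Sω 1).mul (Sκ 1))).add
            ((Sω 2).mul (HasDerivAt.const_mul (2/a) (Sκ 2)))))
    have eW := hWt.deriv
    have eF := hFs.deriv
    have hDD : (D p)ᵀ * (D p) = 1 := mul_eq_one_comm.mp (hD p)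
    have hptr : pt r p = (D p)ᵀ.mulVec (v p) := by
      have h2 : (D p)ᵀ.mulVec ((D p).mulVec (pt r p)) = pt r p := by
        rw [Matrix.mulVec_mulVec, hDD, Matrix.one_mulVec]
      rw [← h2, hkin p hp]
    have hfd := fderiv_eq_grad3 V (r p) (pt r p)
    have hDmul : ∀ i, (D p).mulVec (-(grad3 V (r p))) i
        = -(D p i 0 * grad3 V (r p) 0 + D p i 1 * grad3 V (r p) 1
            + D p i 2 * grad3 V (r p) 2) := by
      intro i; simp only [mulVec_expand, Pi.neg_apply]; ring
    have hDTmul : ∀ i, (D p)ᵀ.mulVec (v p) i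
        = D p 0 i * v p 0 + D p 1 i * v p 1 + D p 2 i * v p 2 := by
      intro i; simp only [mulVec_expand, Matrix.transpose_apply]
    have hs0 := congrFun (hstrain p hp) 0
    have hs1 := congrFun (hstrain p hp) 1
    have hs2 := congrFun (hstrain p hp) 2
    have hc0 := congrFun (hcompat p hp) 0
    have hc1 := congrFun (hcompat p hp) 1
    have hc2 := congrFun (hcompat p hp) 2
    have hl0 := congrFun (hlin p hp) 0
    have hl1 := congrFun (hlin p hp) 1
    have hl2 := congrFun (hlin p hp) 2
    have ha0 := congrFun (hang p hp) 0
    have ha1 := congrFun (hang p hp) 1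
    have ha2 := congrFun (hang p hp) 2
    simp only [Pi.add_apply, Pi.smul_apply, smul_eq_mul, cross3_e3_0, cross3_e3_1,
      cross3_e3_2, cross3_0, cross3_1, cross3_2, Pk_mulVec0, Pk_mulVec1, Pk_mulVec2,
      hDmul] at hs0 hs1 hs2 hc0 hc1 hc2 hl0 hl1 hl2 ha0 ha1 ha2
    rw [pt, eW, ps, eF, hfd, hptr]
    simp only [hDTmul]
    linear_combination (v p 0) * hl0 + (v p 1) * hl1 + (v p 2) * hl2
      + (ω p 0) * ha0 + (ω p 1) * ha1 + (ω p 2) * ha2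
      + (n p 0) * hs0 + (n p 1) * hs1 + (n p 2) * hs2
      + (μ ^ 2)⁻¹ * (κ p 0) * hc0 + (μ ^ 2)⁻¹ * (κ p 1) * hc1
      + (μ ^ 2)⁻¹ * (2 / a) * (κ p 2) * hc2
    -- integrability and FTC in time
  have hWcont : ∀ t : ℝ, Continuous (fun s => Wd ε μ a r v ω n κ V (s, t)) := fun t =>
    hWc.continuous.comp (continuous_id.prodMk continuous_const)
  have hint : ∀ t : ℝ, IntervalIntegrable (fun s => Wd ε μ a r v ω n κ V (s, t))
      MeasureTheory.volume 0 1 := fun t => (hWcont t).intervalIntegrable 0 1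
  have ftcT : ∀ s : ℝ, (∫ t in t₁..t₂, pt (Wd ε μ a r v ω n κ V) (s, t))
      = Wd ε μ a r v ω n κ V (s, t₂) - Wd ε μ a r v ω n κ V (s, t₁) := by
    intro s
    refine intervalIntegral.integral_eq_sub_of_hasDerivAt
      (f := fun t => Wd ε μ a r v ω n κ V (s, t))
      (f' := fun t => pt (Wd ε μ a r v ω n κ V) (s, t)) (fun t _ => ?_) ?_
    · exact hasDerivAt_pt (Wd ε μ a r v ω n κ V) hWc (s, t)
    · exact (cptW.comp (continuous_const.prodMk continuous_id)).intervalIntegrable _ _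
  have step1 : (∫ s in (0:ℝ)..1, Wd ε μ a r v ω n κ V (s, t₂))
      - (∫ s in (0:ℝ)..1, Wd ε μ a r v ω n κ V (s, t₁))
      = ∫ s in (0:ℝ)..1, (Wd ε μ a r v ω n κ V (s, t₂) - Wd ε μ a r v ω n κ V (s, t₁)) :=
    (intervalIntegral.integral_sub (hint t₂) (hint t₁)).symm
  have step2 : (∫ s in (0:ℝ)..1,
        (Wd ε μ a r v ω n κ V (s, t₂) - Wd ε μ a r v ω n κ V (s, t₁)))
      = ∫ s in (0:ℝ)..1, ∫ t in t₁..t₂, pt (Wd ε μ a r v ω n κ V) (s, t) :=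
    intervalIntegral.integral_congr fun s _ => (ftcT s).symm
  -- Fubini
  have hIntOn : MeasureTheory.IntegrableOn (pt (Wd ε μ a r v ω n κ V))
      (Set.Ioc (0:ℝ) 1 ×ˢ Set.Ioc t₁ t₂) MeasureTheory.volume := by
    have hc : MeasureTheory.IntegrableOn (pt (Wd ε μ a r v ω n κ V))
        (Set.Icc (0:ℝ) 1 ×ˢ Set.Icc t₁ t₂) MeasureTheory.volume :=
      cptW.continuousOn.integrableOn_compact (isCompact_Icc.prod isCompact_Icc)
    exact hc.mono_set (Set.prod_mono Set.Ioc_subset_Icc_self Set.Ioc_subset_Icc_self)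
  have swap : (∫ s in Set.Ioc (0:ℝ) 1, ∫ t in Set.Ioc t₁ t₂, pt (Wd ε μ a r v ω n κ V) (s, t))
      = ∫ t in Set.Ioc t₁ t₂, ∫ s in Set.Ioc (0:ℝ) 1, pt (Wd ε μ a r v ω n κ V) (s, t) := by
    apply MeasureTheory.integral_integral_swap
    rw [MeasureTheory.Measure.prod_restrict, ← MeasureTheory.Measure.volume_eq_prod]
    exact hIntOn
  -- FTC in space and boundary conditions
  have inner_eq : ∀ t : ℝ, (∫ s in (0:ℝ)..1, pt (Wd ε μ a r v ω n κ V) (s, t)) = 0 := by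
    intro t
    have congrS : (∫ s in (0:ℝ)..1, pt (Wd ε μ a r v ω n κ V) (s, t))
        = ∫ s in (0:ℝ)..1, ps (Fl μ a v ω n κ) (s, t) := by
      refine intervalIntegral.integral_congr fun s hs => ?_
      exact key (s, t) (by rwa [Set.uIcc_of_le le01] at hs)
    have ftcS : (∫ s in (0:ℝ)..1, ps (Fl μ a v ω n κ) (s, t))
        = Fl μ a v ω n κ (1, t) - Fl μ a v ω n κ (0, t) := by
      refine intervalIntegral.integral_eq_sub_of_hasDerivAt
        (f := fun s => Fl μ a v ω n κ (s, t))
        (f' := fun s => ps (Fl μ a v ω n κ) (s, t)) (fun s _ => ?_) ?_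
      · exact hasDerivAt_ps (Fl μ a v ω n κ) hFc (s, t)
      · exact (cpsF.comp (continuous_id.prodMk continuous_const)).intervalIntegrable _ _
    obtain ⟨hbv, hbω, hbn, hbκ⟩ := hbc t
    rw [congrS, ftcS]
    simp [Fl, hbv, hbω, hbn, hbκ, Matrix.mulVec_zero]
  have total : (∫ s in (0:ℝ)..1, Wd ε μ a r v ω n κ V (s, t₂))
      - (∫ s in (0:ℝ)..1, Wd ε μ a r v ω n κ V (s, t₁)) = 0 := by
    rw [step1, step2]
    rw [intervalIntegral.integral_of_le le01]
    simp only [intervalIntegral.integral_of_le hle]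
    rw [swap]
    have : ∀ t ∈ Set.Ioc t₁ t₂,
        (∫ s in Set.Ioc (0:ℝ) 1, pt (Wd ε μ a r v ω n κ V) (s, t)) = 0 := by
      intro t _
      have h := inner_eq t
      rwa [intervalIntegral.integral_of_le le01] at h
    rw [MeasureTheory.setIntegral_congr_fun measurableSet_Ioc this]
    simp
  linarith [total]

/-- energy conservation of the ε-dependent Cosserat rod system for a
cantilever beam: under the rod system on `[0,1] × ℝ` with boundary conditions
`v(0,t) = 0`, `ω(0,t) = 0`, `n(1,t) = 0`, `κ(1,t) = 0`, the total energy
`E_ε(t) = ∫₀¹ [½‖v‖² + (ε²/2)ω·(P₂·ω) + (ε²μ²a/2)n·(P_{1/a}·n) + (2μ²)⁻¹κ·(P_{2/a}·κ) + V(r̆)] ds`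
is constant in `t`. -/
theorem cosserat_energy_conservation_cantilever
    (ε μ a : ℝ) (hε : 0 ≤ ε) (hμ : 0 < μ) (ha : 0 < a)
    (r v ω n κ : ℝ × ℝ → Fin 3 → ℝ)
    (hr : ContDiff ℝ 1 r) (hv : ContDiff ℝ 1 v) (hω : ContDiff ℝ 1 ω)
    (hn : ContDiff ℝ 1 n) (hκ : ContDiff ℝ 1 κ)
    (D : ℝ × ℝ → Matrix (Fin 3) (Fin 3) ℝ)
    (hD : ∀ p : ℝ × ℝ, D p * (D p)ᵀ = 1)
    (V : (Fin 3 → ℝ) → ℝ) (hV : ContDiff ℝ 1 V)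
    (hkin : ∀ p : ℝ × ℝ, p.1 ∈ Set.Icc (0:ℝ) 1 → (D p).mulVec (pt r p) = v p)
    (hstrain : ∀ p : ℝ × ℝ, p.1 ∈ Set.Icc (0:ℝ) 1 →
      (ε ^ 2 * μ ^ 2 * a) • (Pk a⁻¹).mulVec (pt n p)
        = ps v p + cross3 (κ p) (v p) + cross3 ![0, 0, 1] (ω p)
          + (ε ^ 2 * μ ^ 2 * a) • cross3 ((Pk a⁻¹).mulVec (n p)) (ω p))
    (hcompat : ∀ p : ℝ × ℝ, p.1 ∈ Set.Icc (0:ℝ) 1 →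
      pt κ p = ps ω p + cross3 (κ p) (ω p))
    (hlin : ∀ p : ℝ × ℝ, p.1 ∈ Set.Icc (0:ℝ) 1 →
      pt v p = ps n p + cross3 (κ p) (n p) + cross3 (v p) (ω p)
        + (D p).mulVec (-(grad3 V (r p))))
    (hang : ∀ p : ℝ × ℝ, p.1 ∈ Set.Icc (0:ℝ) 1 →
      (ε ^ 2) • (Pk 2).mulVec (pt ω p)
        = (μ ^ 2)⁻¹ • ((Pk (2 / a)).mulVec (ps κ p)
            + cross3 (κ p) ((Pk (2 / a)).mulVec (κ p)))
          + cross3 ![0, 0, 1] (n p)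
          + (ε ^ 2) • ((μ ^ 2 * a) • cross3 ((Pk a⁻¹).mulVec (n p)) (n p)
            + cross3 ((Pk 2).mulVec (ω p)) (ω p)))
    (hbc : ∀ t : ℝ, v (0, t) = 0 ∧ ω (0, t) = 0 ∧ n (1, t) = 0 ∧ κ (1, t) = 0) :
    ∀ t₁ t₂ : ℝ,
      (∫ s in (0:ℝ)..1, ((1 / 2) * (v (s, t₁) ⬝ᵥ v (s, t₁))
          + (ε ^ 2 / 2) * (ω (s, t₁) ⬝ᵥ (Pk 2).mulVec (ω (s, t₁)))
          + (ε ^ 2 * μ ^ 2 * a / 2) * (n (s, t₁) ⬝ᵥ (Pk a⁻¹).mulVec (n (s, t₁)))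
          + (2 * μ ^ 2)⁻¹ * (κ (s, t₁) ⬝ᵥ (Pk (2 / a)).mulVec (κ (s, t₁)))
          + V (r (s, t₁))))
        = ∫ s in (0:ℝ)..1, ((1 / 2) * (v (s, t₂) ⬝ᵥ v (s, t₂))
          + (ε ^ 2 / 2) * (ω (s, t₂) ⬝ᵥ (Pk 2).mulVec (ω (s, t₂)))
          + (ε ^ 2 * μ ^ 2 * a / 2) * (n (s, t₂) ⬝ᵥ (Pk a⁻¹).mulVec (n (s, t₂)))
          + (2 * μ ^ 2)⁻¹ * (κ (s, t₂) ⬝ᵥ (Pk (2 / a)).mulVec (κ (s, t₂)))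
          + V (r (s, t₂))) := by
  intro t₁ t₂
  rcases le_total t₁ t₂ with h | h
  · exact energy_aux ε μ a r v ω n κ hr hv hω hn hκ D hD V hV hkin hstrain hcompat hlin
      hang hbc t₁ t₂ h
  · exact (energy_aux ε μ a r v ω n κ hr hv hω hn hκ D hD V hV hkin hstrain hcompat hlin
      hang hbc t₂ t₁ h).symm
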